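/- Let E be a finite-dimensional real inner product space, f : E → ℝ convex and twice continuously differentiable on E with β₂-Lipschitz Hessian, R : E → ℝ convex, F = f + R, and x* a minimizer of F with F* = F(x*). Suppose there are 0 < α ≤ β such that α‖h‖² ≤ ⟨∇²f(u)h, h⟩ ≤ β‖h‖² for all u ∈ {u : F(u) ≤ F(x₁)} and h ∈ E. Let C_A ≥ 0 and let (x_t)_{t≥1} be a sequence with x₁ ∈ E such that for every t ≥ 1 there exists v_t with φ_{x_t,1}(v_t) ≤ φ_{x_t,1}(x*) + C_A·‖x_t − x*‖³, and x_{t+1} = v_t if F(v_t) < F(x_t) while x_{t+1} = x_t otherwise. Then for all t ≥ 1: F(x_{t+1}) − F* ≤ (2√2/α^{3/2})·(5β₂/6 + C_A + 1000β₂β³/(3α³))·(F(x_t) − F*)^{3/2} + (64β₂C_A³/(3α⁶))·(F(x_t) − F*)³. -/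

import Mathlib

open RealInnerProductSpace InnerProductSpace

private lemma decr_aux (u u' : ℝ → ℝ)
    (h : ∀ τ ∈ Set.Icc (0:ℝ) 1, HasDerivAt u (u' τ) τ)
    (hneg : ∀ τ ∈ Set.Icc (0:ℝ) 1, u' τ ≤ 0) :
    ∀ a ∈ Set.Icc (0:ℝ) 1, ∀ b ∈ Set.Icc (0:ℝ) 1, a ≤ b → u b ≤ u a := by
  have hanti : AntitoneOn u (Set.Icc (0:ℝ) 1) := by
    apply antitoneOn_of_deriv_nonpos (convex_Icc 0 1)
    · exact fun τ hτ => (h τ hτ).continuousAt.continuousWithinAt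
    · intro τ hτ
      rw [interior_Icc] at hτ
      exact (h τ (Set.mem_Icc_of_Ioo hτ)).differentiableAt.differentiableWithinAt
    · intro τ hτ
      rw [interior_Icc] at hτ
      rw [(h τ (Set.mem_Icc_of_Ioo hτ)).deriv]
      exact hneg τ (Set.mem_Icc_of_Ioo hτ)
  exact fun a ha b hb hab => hanti ha hb hab

private lemma taylor_aux (g g' g'' : ℝ → ℝ) (L : ℝ)
    (h1 : ∀ τ ∈ Set.Icc (0:ℝ) 1, HasDerivAt g (g' τ) τ)
    (h2 : ∀ τ ∈ Set.Icc (0:ℝ) 1, HasDerivAt g' (g'' τ) τ)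
    (h3 : ∀ τ ∈ Set.Icc (0:ℝ) 1, |g'' τ - g'' 0| ≤ L * τ) :
    |g 1 - g 0 - g' 0 - g'' 0 / 2| ≤ L / 6 := by
  have key : ∀ σ : ℝ, σ = 1 ∨ σ = -1 →
      σ * (g 1 - g 0 - g' 0 - g'' 0 / 2) ≤ L / 6 := by
    intro σ hσ
    set w' : ℝ → ℝ := fun τ => σ * (g' τ - g' 0 - τ * g'' 0) - L * τ^2/2 with hw'
    set w : ℝ → ℝ := fun τ => σ * (g τ - g 0 - τ * g' 0 - τ^2/2 * g'' 0) - L * τ^3/6 with hw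
    have hd1 : ∀ τ ∈ Set.Icc (0:ℝ) 1, HasDerivAt w (w' τ) τ := by
      intro τ hτ
      have H := (((((h1 τ hτ).sub_const (g 0)).sub
          ((hasDerivAt_id τ).mul_const (g' 0))).sub
          (((hasDerivAt_pow 2 τ).div_const 2).mul_const (g'' 0))).const_mul σ).sub
          (((hasDerivAt_pow 3 τ).const_mul L).div_const 6)
      refine H.congr_deriv ?_
      simp only [hw']; push_cast; ring
    have hd2 : ∀ τ ∈ Set.Icc (0:ℝ) 1, HasDerivAt w' (σ * (g'' τ - g'' 0) - L * τ) τ := by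
      intro τ hτ
      have H := ((((h2 τ hτ).sub_const (g' 0)).sub
          ((hasDerivAt_id τ).mul_const (g'' 0))).const_mul σ).sub
          (((hasDerivAt_pow 2 τ).const_mul L).div_const 2)
      refine H.congr_deriv ?_
      push_cast; ring
    have hw'neg : ∀ τ ∈ Set.Icc (0:ℝ) 1, w' τ ≤ 0 := by
      intro τ hτ
      have hub : ∀ τ' ∈ Set.Icc (0:ℝ) 1, σ * (g'' τ' - g'' 0) - L * τ' ≤ 0 := by
        intro τ' hτ'
        have habs := h3 τ' hτ'
        rcases abs_le.mp habs with ⟨hl, hr⟩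
        rcases hσ with h | h <;> subst h <;> nlinarith
      have := decr_aux w' (fun τ' => σ * (g'' τ' - g'' 0) - L * τ') hd2 hub
        0 (by constructor <;> norm_num) τ hτ hτ.1
      have h0 : w' 0 = 0 := by simp [hw']
      linarith
    have hfin := decr_aux w w' hd1 hw'neg 0 (by constructor <;> norm_num) 1
      (by constructor <;> norm_num) zero_le_one
    have hw0 : w 0 = 0 := by simp [hw]
    have hw1 : w 1 = σ * (g 1 - g 0 - g' 0 - g'' 0/2) - L/6 := by
      simp only [hw, one_pow]; ring
    rw [hw0, hw1] at hfin
    linarith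
  have hp := key 1 (Or.inl rfl)
  have hm := key (-1) (Or.inr rfl)
  rw [abs_le]; constructor <;> nlinarith

private lemma small_tau (K c : ℝ) (h : ∀ τ : ℝ, 0 < τ → τ ≤ 1 → K ≤ c * τ) : K ≤ 0 := by
  by_contra hK
  push_neg at hK
  rcases le_or_gt c 0 with hc | hc
  · have := h 1 one_pos le_rfl; nlinarith
  · have hτ : (0:ℝ) < min 1 (K / (2 * c)) := lt_min one_pos (by positivity)
    have h1 : K ≤ c * min 1 (K / (2 * c)) := h _ hτ (min_le_left _ _)
    have h2 : c * min 1 (K / (2 * c)) ≤ c * (K / (2 * c)) :=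
      mul_le_mul_of_nonneg_left (min_le_right _ _) hc.le
    have h3 : c * (K / (2 * c)) = K / 2 := by field_simp
    linarith

section vec
variable {E : Type*} [NormedAddCommGroup E] [InnerProductSpace ℝ E] [FiniteDimensional ℝ E]

private lemma line_deriv1 (f : E → ℝ) (hf2 : ContDiff ℝ 2 f) (p q : E) (τ : ℝ) :
    HasDerivAt (fun s : ℝ => f (p + s • q)) ⟪gradient f (p + τ • q), q⟫ τ := by
  have hline : HasDerivAt (fun s : ℝ => p + s • q) q τ := by
    simpa using ((hasDerivAt_id τ).smul_const q).const_add p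
  have hfd : HasFDerivAt f (fderiv ℝ f (p + τ • q)) (p + τ • q) :=
    (hf2.differentiable two_ne_zero (p + τ • q)).hasFDerivAt
  have h := hfd.comp_hasDerivAt τ hline
  have he : fderiv ℝ f (p + τ • q) q = ⟪gradient f (p + τ • q), q⟫ := by
    rw [gradient, ← toDual_symm_apply]
  rw [← he]; exact h

private lemma line_deriv2 (f : E → ℝ) (hf2 : ContDiff ℝ 2 f) (p q z : E) (τ : ℝ) :
    HasDerivAt (fun s : ℝ => ⟪gradient f (p + s • q), z⟫)
      ⟪(fderiv ℝ (gradient f) (p + τ • q)) q, z⟫ τ := by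
  have hline : HasDerivAt (fun s : ℝ => p + s • q) q τ := by
    simpa using ((hasDerivAt_id τ).smul_const q).const_add p
  have hg : ContDiff ℝ 1 (gradient f) :=
    ((toDual ℝ E).symm.contDiff).comp (hf2.fderiv_right (le_refl _))
  have hgd : HasFDerivAt (gradient f) (fderiv ℝ (gradient f) (p + τ • q)) (p + τ • q) :=
    (hg.differentiable one_ne_zero (p + τ • q)).hasFDerivAt
  have h1 : HasDerivAt (fun s : ℝ => gradient f (p + s • q))
      ((fderiv ℝ (gradient f) (p + τ • q)) q) τ := by have := hgd.comp_hasDerivAt τ hline; exact this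
  have h2 := ((innerSL ℝ z).hasFDerivAt).comp_hasDerivAt τ h1
  simp only [innerSL_apply_apply] at h2
  have h3 : (fun s : ℝ => ⟪gradient f (p + s • q), z⟫)
      = (fun w => ⟪z, w⟫) ∘ fun s => gradient f (p + s • q) := by
    funext s; simp only [Function.comp_apply]; exact real_inner_comm _ _
  rw [h3]; exact h2.congr_deriv (real_inner_comm _ _)

private lemma hess_symm (f : E → ℝ) (hf2 : ContDiff ℝ 2 f) (u h k : E) :
    ⟪(fderiv ℝ (gradient f) u) h, k⟫ = ⟪(fderiv ℝ (gradient f) u) k, h⟫ := by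
  have hD2 : HasFDerivAt (fderiv ℝ f) (fderiv ℝ (fderiv ℝ f) u) u :=
    (((hf2.fderiv_right (m := 1) (le_refl _)).differentiable one_ne_zero) u).hasFDerivAt
  have hcomp : HasFDerivAt (gradient f)
      (((toDual ℝ E).symm.toContinuousLinearMap).comp (fderiv ℝ (fderiv ℝ f) u)) u :=
    ((toDual ℝ E).symm.toContinuousLinearMap.hasFDerivAt).comp u hD2
  have heq : fderiv ℝ (gradient f) u
      = ((toDual ℝ E).symm.toContinuousLinearMap).comp (fderiv ℝ (fderiv ℝ f) u) :=
    hcomp.fderiv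
  have happly : ∀ a b : E, ⟪(fderiv ℝ (gradient f) u) a, b⟫ = fderiv ℝ (fderiv ℝ f) u a b := by
    intro a b
    rw [heq]
    simp [toDual_symm_apply]
  rw [happly, happly]
  exact second_derivative_symmetric (fun y => ((hf2.differentiable two_ne_zero) y).hasFDerivAt)
    hD2 h k

private lemma cs_bound (T : E →L[ℝ] E) (β : ℝ) (hβ : 0 ≤ β)
    (hsymm : ∀ h k : E, ⟪T h, k⟫ = ⟪T k, h⟫)
    (hpsd : ∀ h : E, 0 ≤ ⟪T h, h⟫)
    (hub : ∀ h : E, ⟪T h, h⟫ ≤ β * ‖h‖^2) (h k : E) :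
    ⟪T h, k⟫ ≤ β * ‖h‖ * ‖k‖ := by
  have hquad : ∀ t : ℝ, 0 ≤ ⟪T k, k⟫ * (t*t) + (2*⟪T h, k⟫) * t + ⟪T h, h⟫ := by
    intro t
    have h0 := hpsd (h + t • k)
    have hexp : ⟪T (h + t • k), h + t • k⟫
        = ⟪T k, k⟫ * (t*t) + (2*⟪T h, k⟫) * t + ⟪T h, h⟫ := by
      have hsymm1 := hsymm h k
      simp only [map_add, map_smul, inner_add_left, inner_add_right,
        inner_smul_left, inner_smul_right, RCLike.ofReal_real_eq_id, id_eq,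
        conj_trivial]
      rw [← hsymm1]; ring
    rw [hexp] at h0; exact h0
  have hdisc := discrim_le_zero hquad
  rw [discrim] at hdisc
  have hBk := hub k
  have hBh := hub h
  have hBk0 := hpsd k
  have hBh0 := hpsd h
  nlinarith [sq_nonneg (β*‖h‖*‖k‖ - ⟪T h, k⟫), sq_nonneg (β*‖h‖*‖k‖ + ⟪T h, k⟫),
    mul_nonneg (mul_nonneg hβ (norm_nonneg h)) (norm_nonneg k),
    mul_le_mul hBh hBk hBk0 (by positivity : (0:ℝ) ≤ β*‖h‖^2),
    sq_nonneg (‖h‖*‖k‖)]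

private lemma taylor_vec (f : E → ℝ) (hf2 : ContDiff ℝ 2 f) (β₂ : ℝ)
    (hLip : ∀ u v : E,
      ‖fderiv ℝ (gradient f) u - fderiv ℝ (gradient f) v‖ ≤ β₂ * ‖u - v‖)
    (p q : E) :
    |f (p+q) - f p - ⟪gradient f p, q⟫ - ⟪(fderiv ℝ (gradient f) p) q, q⟫/2|
      ≤ β₂*‖q‖^3/6 := by
  have h3 : ∀ τ ∈ Set.Icc (0:ℝ) 1,
      |⟪(fderiv ℝ (gradient f) (p + τ • q)) q, q⟫
        - ⟪(fderiv ℝ (gradient f) (p + (0:ℝ) • q)) q, q⟫| ≤ (β₂*‖q‖^3) * τ := by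
    intro τ hτ
    have e0 : p + (0:ℝ) • q = p := by simp
    rw [e0]
    set T := fderiv ℝ (gradient f) (p + τ • q) - fderiv ℝ (gradient f) p with hT
    have hsub : ⟪(fderiv ℝ (gradient f) (p + τ • q)) q, q⟫
        - ⟪(fderiv ℝ (gradient f) p) q, q⟫ = ⟪T q, q⟫ := by
      simp [hT, ContinuousLinearMap.sub_apply, inner_sub_left]
    rw [hsub]
    have h1 : |⟪T q, q⟫| ≤ ‖T q‖ * ‖q‖ := abs_real_inner_le_norm _ _
    have h2 : ‖T q‖ ≤ ‖T‖ * ‖q‖ := T.le_opNorm q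
    have h4 : ‖T‖ ≤ β₂ * (τ * ‖q‖) := by
      have := hLip (p + τ • q) p
      have he : (p + τ • q) - p = τ • q := by abel
      rw [he, norm_smul, Real.norm_eq_abs, abs_of_nonneg hτ.1] at this
      exact this
    have hq0 : (0:ℝ) ≤ ‖q‖ := norm_nonneg q
    have hT0 : (0:ℝ) ≤ ‖T‖ := norm_nonneg T
    nlinarith [norm_nonneg (T q), mul_le_mul_of_nonneg_right h2 hq0,
      mul_le_mul_of_nonneg_right (mul_le_mul_of_nonneg_right h4 hq0) hq0]
  have h := taylor_aux (fun τ => f (p + τ • q))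
    (fun τ => ⟪gradient f (p + τ • q), q⟫)
    (fun τ => ⟪(fderiv ℝ (gradient f) (p + τ • q)) q, q⟫) (β₂*‖q‖^3)
    (fun τ _ => line_deriv1 f hf2 p q τ)
    (fun τ _ => line_deriv2 f hf2 p q q τ) h3
  simp only [zero_smul, add_zero, one_smul] at h
  convert h using 2

private lemma grad_line_bound (f : E → ℝ) (hf2 : ContDiff ℝ 2 f) (p q z : E) (M : ℝ)
    (hM : ∀ τ ∈ Set.Icc (0:ℝ) 1, ⟪(fderiv ℝ (gradient f) (p + τ • q)) q, z⟫ ≤ M) :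
    ⟪gradient f (p+q), z⟫ - ⟪gradient f p, z⟫ ≤ M := by
  set w : ℝ → ℝ := fun τ => ⟪gradient f (p + τ • q), z⟫ - M*τ with hw
  have hd : ∀ τ ∈ Set.Icc (0:ℝ) 1, HasDerivAt w
      (⟪(fderiv ℝ (gradient f) (p + τ • q)) q, z⟫ - M) τ := by
    intro τ _
    have H := (line_deriv2 f hf2 p q z τ).sub ((hasDerivAt_id τ).const_mul M)
    refine H.congr_deriv ?_
    ring
  have hneg : ∀ τ ∈ Set.Icc (0:ℝ) 1,
      ⟪(fderiv ℝ (gradient f) (p + τ • q)) q, z⟫ - M ≤ 0 := fun τ hτ => by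
    linarith [hM τ hτ]
  have := decr_aux w _ hd hneg 0 (by constructor <;> norm_num) 1
    (by constructor <;> norm_num) zero_le_one
  simp only [hw, zero_smul, add_zero, one_smul, mul_zero, mul_one] at this
  linarith

end vec

set_option maxHeartbeats 2000000 in
private lemma final_algebra (α β β₂ CA δ δ' d r : ℝ) (hα : 0 < α) (hαβ : α ≤ β)
    (hβ₂ : 0 ≤ β₂) (hCA : 0 ≤ CA) (hδ : 0 ≤ δ) (hd : 0 ≤ d) (hr : 0 ≤ r)
    (h2 : α * d^2 ≤ 2*δ)
    (h4 : α/2 * r^2 ≤ β*d*(d+r) + β/2*d^2 + CA*d^3)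
    (h5 : δ' ≤ (β₂/6 + CA) * d^3 + β₂/6 * r^3) :
    δ' ≤ (2*Real.sqrt 2/α^((3:ℝ)/2)) * (5*β₂/6 + CA + 1000*β₂*β^3/(3*α^3)) * δ^((3:ℝ)/2)
      + (64*β₂*CA^3/(3*α^6)) * δ^3 := by
  have hβ0 : 0 < β := lt_of_lt_of_le hα hαβ
  have hαr : α^((3:ℝ)/2) = (Real.sqrt α)^3 := by
    have h1 : α ^ ((3:ℝ)/2) = (α ^ ((1:ℝ)/2))^(3:ℕ) := by
      rw [← Real.rpow_natCast (α ^ ((1:ℝ)/2)) 3, ← Real.rpow_mul hα.le]; norm_num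
    rw [h1, ← Real.sqrt_eq_rpow]
  have hδr : δ^((3:ℝ)/2) = (Real.sqrt δ)^3 := by
    have h1 : δ ^ ((3:ℝ)/2) = (δ ^ ((1:ℝ)/2))^(3:ℕ) := by
      rw [← Real.rpow_natCast (δ ^ ((1:ℝ)/2)) 3, ← Real.rpow_mul hδ]; norm_num
    rw [h1, ← Real.sqrt_eq_rpow]
  rw [hαr, hδr]
  set σ := Real.sqrt α with hσdef
  have hσ : 0 < σ := Real.sqrt_pos.2 hα
  have hσ2 : σ^2 = α := Real.sq_sqrt hα.le
  clear_value σ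
  set s := Real.sqrt δ with hsdef
  have hs0 : 0 ≤ s := Real.sqrt_nonneg δ
  have hs2 : s^2 = δ := Real.sq_sqrt hδ
  clear_value s
  set c2 := Real.sqrt 2 with hc2def
  have hc20 : (1:ℝ) ≤ c2 := by
    rw [hc2def, show (1:ℝ) = Real.sqrt 1 from (Real.sqrt_one).symm]
    exact Real.sqrt_le_sqrt (by norm_num)
  have hc2sq : c2^2 = 2 := Real.sq_sqrt (by norm_num)
  clear_value c2
  have hδ3 : δ^3 = s^6 := by rw [← hs2]; ring
  rw [hδ3]
  rw [← hσ2] at h2 h4 hαβ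
  have hK1 : σ^4*r^2 ≤ 10*β^2*d^2 + 4*CA*d^3*σ^2 := by
    have hm := mul_le_mul_of_nonneg_left h4 (show (0:ℝ) ≤ 4*σ^2 by positivity)
    nlinarith [sq_nonneg (σ^2*r - 2*β*d),
      mul_nonneg (mul_nonneg (sub_nonneg.2 hαβ) hβ0.le) (sq_nonneg d)]
  set b' := Real.sqrt (4*CA*d^3*σ^2) with hbdef
  have hb0 : 0 ≤ b' := Real.sqrt_nonneg _
  have hb2 : b'^2 = 4*CA*d^3*σ^2 := Real.sq_sqrt (by positivity)
  clear_value b'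
  have hrb : σ^2*r ≤ 19/6*(β*d) + b' := by
    have hXsq : (σ^2*r)^2 ≤ (19/6*(β*d) + b')^2 := by
      nlinarith [hK1, hb2, mul_nonneg (mul_nonneg hβ0.le hd) hb0,
        sq_nonneg (β*d)]
    exact (pow_le_pow_iff_left₀ (by positivity) (by positivity) two_ne_zero).mp hXsq
  have hcube1 : (σ^2*r)^3 ≤ (19/6*(β*d) + b')^3 :=
    pow_le_pow_left₀ (by positivity) hrb 3
  have hcube2 : (19/6*(β*d) + b')^3 ≤ 16*(19/6*(β*d))^3 + 16/9*b'^3 := by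
    nlinarith [mul_nonneg (sq_nonneg (3*(19/6*(β*d)) - b'))
      (show (0:ℝ) ≤ 5/3*(19/6*(β*d)) + 7/9*b' by positivity)]
  have hb3 : b'^3 ≤ 2*σ^6*d^3 + 8*CA^3*d^6 := by
    have hT2 : (b'^3)^2 = 4*(2*σ^6*d^3)*(8*CA^3*d^6) := by
      rw [show (b'^3)^2 = (b'^2)^3 from by ring, hb2]; ring
    nlinarith [hT2, sq_nonneg (2*σ^6*d^3 - 8*CA^3*d^6), pow_nonneg hb0 3,
      mul_nonneg (mul_nonneg (show (0:ℝ) ≤ 2 by norm_num) (pow_nonneg hσ.le 6)) (pow_nonneg hd 3),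
      mul_nonneg (mul_nonneg (show (0:ℝ) ≤ 8 by norm_num) (pow_nonneg hCA 3)) (pow_nonneg hd 6)]
  have hr3 : σ^6*r^3 ≤ 13718/27*(β^3*d^3) + 32/9*(σ^6*d^3) + 128/9*(CA^3*d^6) := by
    have e : (σ^2*r)^3 = σ^6*r^3 := by ring
    rw [e] at hcube1
    have hb3' := mul_le_mul_of_nonneg_left hb3 (show (0:ℝ) ≤ 16/9 by norm_num)
    nlinarith [hcube1, hcube2, hb3']
  have hd3 : σ^3*d^3 ≤ 2*c2*s^3 := by
    have hsd : σ*d ≤ c2*s := by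
      have hXsq : (σ*d)^2 ≤ (c2*s)^2 := by nlinarith [h2, hs2, hc2sq]
      exact (pow_le_pow_iff_left₀ (by positivity) (by positivity) two_ne_zero).mp hXsq
    have h3 := pow_le_pow_left₀ (by positivity : (0:ℝ) ≤ σ*d) hsd 3
    have e : (c2*s)^3 = 2*(c2*s^3) := by
      rw [mul_pow, show c2^3 = c2^2*c2 from by ring, hc2sq]; ring
    nlinarith [h3]
  have hd6 : σ^6*d^6 ≤ 8*s^6 := by
    have h3 := pow_le_pow_left₀ (by positivity : (0:ℝ) ≤ σ^2*d^2) h2 3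
    rw [← hs2] at h3
    nlinarith [h3]
  have hRHSeq : (2*c2/σ^3) * (5*β₂/6 + CA + 1000*β₂*β^3/(3*α^3)) * s^3
      + (64*β₂*CA^3/(3*α^6)) * s^6
      = (c2*(5*β₂+6*CA)*σ^9*s^3 + 2000*c2*β₂*β^3*σ^3*s^3
          + 64*β₂*CA^3*s^6)/(3*σ^12) := by
    rw [← hσ2]; field_simp; ring
  rw [hRHSeq, le_div_iff₀ (by positivity)]
  clear hRHSeq hK1 hrb hcube1 hcube2 hb3 hb2 hb0 h2 h4 hαr hδr hδ3 hσdef hsdef hc2def hbdef hs2 hσ2 hc2sq hαβ hδ hα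
  have m0 := mul_le_mul_of_nonneg_left h5 (show (0:ℝ) ≤ 3*σ^12 by positivity)
  have m1 := mul_le_mul_of_nonneg_left hr3 (show (0:ℝ) ≤ β₂/2*σ^6 by positivity)
  have m2 := mul_le_mul_of_nonneg_left hd3
    (show (0:ℝ) ≤ (41/18*β₂ + 3*CA)*σ^9 by positivity)
  have m3 := mul_le_mul_of_nonneg_left hd6 (show (0:ℝ) ≤ 64/9*β₂*CA^3 by positivity)
  have m4 := mul_le_mul_of_nonneg_left hd3
    (show (0:ℝ) ≤ 6859/27*β₂*β^3*σ^3 by positivity)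
  have m5 : (0:ℝ) ≤ c2*β₂*β^3*σ^3*s^3 := by positivity
  have m6 : (0:ℝ) ≤ β₂*CA^3*s^6 := by positivity
  have m7 : (0:ℝ) ≤ c2*β₂*σ^9*s^3 := by positivity
  linarith [m0, m1, m2, m3, m4, m5, m6, m7]

set_option maxHeartbeats 1000000 in
/-- Theorem: local super-linear convergence with an (unregularized) weak
proximal Newton oracle, under strong convexity/smoothness of the Hessian on the initial
level set. Sequences are indexed from `0` here (the paper indexes from `1`, so `x 0` is
the paper's `x₁`). -/
theorem stmt_3
    {E : Type*} [NormedAddCommGroup E] [InnerProductSpace ℝ E] [FiniteDimensional ℝ E]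
    (f R : E → ℝ) (β₂ : ℝ)
    (hfconv : ConvexOn ℝ Set.univ f)
    (hf2 : ContDiff ℝ 2 f)
    (hHessLip : ∀ u v : E,
      ‖fderiv ℝ (gradient f) u - fderiv ℝ (gradient f) v‖ ≤ β₂ * ‖u - v‖)
    (hR : ConvexOn ℝ Set.univ R)
    (F : E → ℝ) (hF : ∀ u, F u = f u + R u)
    (xs : E) (hmin : ∀ u, F xs ≤ F u)
    (α β : ℝ) (hα : 0 < α) (hαβ : α ≤ β)
    (x v : ℕ → E)
    (hHess : ∀ u : E, F u ≤ F (x 0) → ∀ h : E,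
      α * ‖h‖ ^ 2 ≤ ⟪(fderiv ℝ (gradient f) u) h, h⟫ ∧
      ⟪(fderiv ℝ (gradient f) u) h, h⟫ ≤ β * ‖h‖ ^ 2)
    (CA : ℝ) (hCA : 0 ≤ CA)
    (φ : E → E → ℝ)
    (hφ : ∀ x' w, φ x' w =
      ⟪gradient f x', w - x'⟫
        + (1 / 2) * ⟪(fderiv ℝ (gradient f) x') (w - x'), w - x'⟫ + R w)
    (hv : ∀ t, φ (x t) (v t) ≤ φ (x t) xs + CA * ‖x t - xs‖ ^ 3)
    (hupd : ∀ t, x (t + 1) = if F (v t) < F (x t) then v t else x t) :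
    ∀ t, F (x (t + 1)) - F xs ≤
      (2 * Real.sqrt 2 / α ^ ((3 : ℝ) / 2))
          * (5 * β₂ / 6 + CA + 1000 * β₂ * β ^ 3 / (3 * α ^ 3))
          * (F (x t) - F xs) ^ ((3 : ℝ) / 2)
        + (64 * β₂ * CA ^ 3 / (3 * α ^ 6)) * (F (x t) - F xs) ^ 3 := by
  intro t
  rcases lt_or_ge β₂ 0 with hβ₂neg | hβ₂
  · -- degenerate: β₂ < 0 forces E to be a single point
    have hsing : ∀ a b : E, a = b := by
      intro a b; by_contra hne
      have h1 : 0 < ‖a - b‖ := by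
        rw [norm_pos_iff, sub_ne_zero]; exact hne
      have h2 := hHessLip a b
      nlinarith [norm_nonneg (fderiv ℝ (gradient f) a - fderiv ℝ (gradient f) b)]
    have e1 : x (t+1) = xs := hsing _ _
    have e2 : x t = xs := hsing _ _
    rw [e1, e2, sub_self]
    simp [Real.zero_rpow (show ((3:ℝ)/2) ≠ 0 by norm_num)]
  have hβ : 0 < β := lt_of_lt_of_le hα hαβ
  have hFconv : ConvexOn ℝ Set.univ F := by
    have he : F = fun u => f u + R u := funext hF
    rw [he]; exact hfconv.add hR
  have hlevel : ∀ n, F (x n) ≤ F (x 0) := by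
    intro n
    induction n with
    | zero => exact le_rfl
    | succ n ih =>
      rw [hupd n]
      split_ifs with hc
      · exact (le_of_lt hc).trans ih
      · exact ih
  have hseg_lvl : ∀ w : E, F w ≤ F (x 0) → ∀ τ ∈ Set.Icc (0:ℝ) 1,
      F (xs + τ • (w - xs)) ≤ F (x 0) := by
    intro w hw τ hτ
    have hcomb := hFconv.2 (Set.mem_univ xs) (Set.mem_univ w)
      (by linarith [hτ.2] : (0:ℝ) ≤ 1 - τ) hτ.1 (by ring)
    have he : (1-τ) • xs + τ • w = xs + τ • (w - xs) := by module
    rw [he] at hcomb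
    simp only [smul_eq_mul] at hcomb
    nlinarith [hτ.1, hτ.2, hmin (x 0), hw, hcomb]
  -- strong convexity on the level set
  have strong : ∀ w : E, F w ≤ F (x 0) → α * ‖w - xs‖^2 ≤ 2*(F w - F xs) := by
    intro w hw
    set q : E := w - xs with hq
    have hc1 : xs + (1:ℝ) • q = w := by rw [one_smul, hq]; abel
    set pf : ℝ → ℝ := fun τ => f (xs + τ • q) - α*‖q‖^2*τ^2/2 with hpf
    have hpf' : ∀ τ : ℝ, HasDerivAt pf
        (⟪gradient f (xs + τ • q), q⟫ - α*‖q‖^2*τ) τ := by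
      intro τ
      have H := (line_deriv1 f hf2 xs q τ).sub
        (((hasDerivAt_pow 2 τ).const_mul (α*‖q‖^2)).div_const 2)
      refine H.congr_deriv ?_
      push_cast; ring
    have hdpf : deriv pf = fun τ => ⟪gradient f (xs + τ • q), q⟫ - α*‖q‖^2*τ :=
      funext fun τ => (hpf' τ).deriv
    have hpf'' : ∀ τ : ℝ, HasDerivAt (deriv pf)
        (⟪(fderiv ℝ (gradient f) (xs + τ • q)) q, q⟫ - α*‖q‖^2) τ := by
      intro τ
      rw [hdpf]
      have H := (line_deriv2 f hf2 xs q q τ).sub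
        ((hasDerivAt_id τ).const_mul (α*‖q‖^2))
      refine H.congr_deriv ?_
      ring
    have hconvf : ConvexOn ℝ (Set.Icc (0:ℝ) 1) pf := by
      apply convexOn_of_deriv2_nonneg (convex_Icc 0 1)
      · exact fun τ _ => (hpf' τ).continuousAt.continuousWithinAt
      · exact fun τ _ => (hpf' τ).differentiableAt.differentiableWithinAt
      · exact fun τ _ => (hpf'' τ).differentiableAt.differentiableWithinAt
      · intro τ hτ
        rw [interior_Icc] at hτ
        have hlv : F (xs + τ • q) ≤ F (x 0) :=
          hseg_lvl w hw τ (Set.mem_Icc_of_Ioo hτ)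
        have hd2eq : deriv^[2] pf τ
            = ⟪(fderiv ℝ (gradient f) (xs + τ • q)) q, q⟫ - α*‖q‖^2 := by
          rw [show deriv^[2] pf = deriv (deriv pf) from by
            rw [Function.iterate_succ, Function.iterate_one]; rfl]
          exact (hpf'' τ).deriv
        rw [hd2eq]
        linarith [(hHess (xs + τ • q) hlv q).1]
    have hconvR : ConvexOn ℝ (Set.Icc (0:ℝ) 1) (fun τ : ℝ => R (xs + τ • q)) := by
      have hcomp := hR.comp_affineMap (AffineMap.lineMap xs w : ℝ →ᵃ[ℝ] E)
      have he : (fun τ : ℝ => R (xs + τ • q)) = R ∘ (AffineMap.lineMap xs w) := by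
        funext τ
        simp only [Function.comp_apply, AffineMap.lineMap_apply]
        congr 1
        simp [hq]
        module
      rw [he]
      apply hcomp.subset _ (convex_Icc 0 1)
      intro τ _
      simp
    have hsum := hconvf.add hconvR
    have key : ∀ τ : ℝ, 0 < τ → τ ≤ 1 →
        α*‖q‖^2/2 - (F w - F xs) ≤ (α*‖q‖^2/2) * τ := by
      intro τ hτ0 hτ1
      have h0mem : (0:ℝ) ∈ Set.Icc (0:ℝ) 1 := by constructor <;> norm_num
      have h1mem : (1:ℝ) ∈ Set.Icc (0:ℝ) 1 := by constructor <;> norm_num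
      have hcomb := hsum.2 h0mem h1mem
        (by linarith : (0:ℝ) ≤ 1 - τ) hτ0.le (by ring)
      simp only [smul_eq_mul, mul_zero, mul_one, zero_add, Pi.add_apply] at hcomb
      have hpf0 : pf 0 = f xs := by simp [hpf]
      have hpf1 : pf 1 = f w - α*‖q‖^2/2 := by
        simp only [hpf, hc1, one_pow]; ring
      have hc0 : xs + (0:ℝ) • q = xs := by simp
      rw [hpf0, hpf1, hc0, hc1] at hcomb
      -- hcomb : pf τ + R (xs + τ•q) ≤ (1-τ)*(f xs + R xs) + τ*(f w - α‖q‖²/2 + R w)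
      have hlow : F xs ≤ f (xs + τ • q) + R (xs + τ • q) := by
        rw [← hF]; exact hmin _
      have hFxs : F xs = f xs + R xs := hF xs
      have hFw : F w = f w + R w := hF w
      have hstep : (α*‖q‖^2/2 - (F w - F xs)) * τ ≤ ((α*‖q‖^2/2) * τ) * τ := by
        simp only [hpf] at hcomb
        nlinarith [hcomb, hlow]
      exact le_of_mul_le_mul_right hstep hτ0
    have := small_tau _ _ key
    linarith
  -- subgradient inequality for R at xs
  have hsubgrad : ∀ w : E, R xs - ⟪gradient f xs, w - xs⟫ ≤ R w := by
    intro w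
    set z : E := w - xs with hz
    have hQA := (hHess xs (hmin (x 0)) z).1
    have hQ0 : 0 ≤ ⟪(fderiv ℝ (gradient f) xs) z, z⟫ :=
      le_trans (by positivity) hQA
    have key : ∀ τ : ℝ, 0 < τ → τ ≤ 1 →
        R xs - ⟪gradient f xs, z⟫ - R w
          ≤ (⟪(fderiv ℝ (gradient f) xs) z, z⟫/2 + β₂*‖z‖^3/6) * τ := by
      intro τ hτ0 hτ1
      have htay := (abs_le.mp (taylor_vec f hf2 β₂ hHessLip xs (τ • z))).2
      have hsm1 : ⟪gradient f xs, τ • z⟫ = τ * ⟪gradient f xs, z⟫ :=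
        real_inner_smul_right _ _ _
      have hsm2 : ⟪(fderiv ℝ (gradient f) xs) (τ • z), τ • z⟫
          = τ^2 * ⟪(fderiv ℝ (gradient f) xs) z, z⟫ := by
        rw [map_smul, real_inner_smul_left, real_inner_smul_right]; ring
      have hsm3 : ‖τ • z‖^3 = τ^3 * ‖z‖^3 := by
        rw [norm_smul, Real.norm_eq_abs, abs_of_nonneg hτ0.le]; ring
      rw [hsm1, hsm2, hsm3] at htay
      have hconvR := hR.2 (Set.mem_univ xs) (Set.mem_univ w)
        (by linarith : (0:ℝ) ≤ 1 - τ) hτ0.le (by ring)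
      have he : (1-τ) • xs + τ • w = xs + τ • z := by rw [hz]; module
      rw [he] at hconvR
      have hmin' := hmin (xs + τ • z)
      rw [hF, hF] at hmin'
      have hτ3 : β₂*‖z‖^3*τ^3 ≤ β₂*‖z‖^3*τ^2 := by
        have := mul_nonneg (show (0:ℝ) ≤ β₂*‖z‖^3*τ^2 by positivity)
          (show (0:ℝ) ≤ 1-τ by linarith)
        nlinarith [this]
      simp only [smul_eq_mul] at hconvR
      have hstep : (R xs - ⟪gradient f xs, z⟫ - R w) * τ
          ≤ ((⟪(fderiv ℝ (gradient f) xs) z, z⟫/2 + β₂*‖z‖^3/6) * τ) * τ := by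
        nlinarith [htay, hconvR, hmin', hτ3]
      exact le_of_mul_le_mul_right hstep hτ0
    have := small_tau _ _ key
    linarith
  -- per-step quantities
  have hXl : F (x t) ≤ F (x 0) := hlevel t
  have hδ0 : 0 ≤ F (x t) - F xs := by linarith [hmin (x t)]
  have h2 : α * ‖x t - xs‖^2 ≤ 2*(F (x t) - F xs) := strong (x t) hXl
  have htup := (abs_le.mp (taylor_vec f hf2 β₂ hHessLip (x t) (v t - x t))).2
  rw [add_sub_cancel] at htup
  have htdn := (abs_le.mp (taylor_vec f hf2 β₂ hHessLip (x t) (xs - x t))).1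
  rw [add_sub_cancel] at htdn
  have enorm : ‖xs - x t‖ = ‖x t - xs‖ := norm_sub_rev _ _
  rw [enorm] at htdn
  have horacle := hv t
  rw [hφ, hφ] at horacle
  -- (F4): bound on the step length
  have hQl := (hHess (x t) hXl (v t - x t)).1
  have hQu := (hHess (x t) hXl (xs - x t)).2
  rw [enorm] at hQu
  have hsubv := hsubgrad (v t)
  have hgd : ⟪gradient f (x t), xs - v t⟫ - ⟪gradient f xs, xs - v t⟫
      ≤ β*‖x t - xs‖*‖xs - v t‖ := by
    have hM : ∀ τ ∈ Set.Icc (0:ℝ) 1,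
        ⟪(fderiv ℝ (gradient f) (xs + τ • (x t - xs))) (x t - xs), xs - v t⟫
          ≤ β*‖x t - xs‖*‖xs - v t‖ := by
      intro τ hτ
      have hlvl : F (xs + τ • (x t - xs)) ≤ F (x 0) := hseg_lvl (x t) hXl τ hτ
      exact cs_bound _ β hβ.le (hess_symm f hf2 _)
        (fun h => le_trans (by positivity) (hHess _ hlvl h).1)
        (fun h => (hHess _ hlvl h).2) _ _
    have h := grad_line_bound f hf2 xs (x t - xs) (xs - v t) _ hM
    rw [add_sub_cancel] at h
    exact h
  have htri : ‖xs - v t‖ ≤ ‖x t - xs‖ + ‖v t - x t‖ := by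
    have h1 : xs - v t = (xs - x t) + (x t - v t) := by abel
    calc ‖xs - v t‖ = ‖(xs - x t) + (x t - v t)‖ := by rw [← h1]
    _ ≤ ‖xs - x t‖ + ‖x t - v t‖ := norm_add_le _ _
    _ = ‖x t - xs‖ + ‖v t - x t‖ := by rw [norm_sub_rev xs (x t), norm_sub_rev (x t) (v t)]
  have hF4 : α/2*‖v t - x t‖^2 ≤ β*‖x t - xs‖*(‖x t - xs‖+‖v t - x t‖)
      + β/2*‖x t - xs‖^2 + CA*‖x t - xs‖^3 := by
    have e1 : ⟪gradient f (x t), xs - x t⟫ - ⟪gradient f (x t), v t - x t⟫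
        = ⟪gradient f (x t), xs - v t⟫ := by
      rw [← inner_sub_right]; congr 1; abel
    have e2 : ⟪gradient f xs, v t - xs⟫ = -⟪gradient f xs, xs - v t⟫ := by
      rw [← inner_neg_right]; congr 1; abel
    have hβd : (0:ℝ) ≤ β*‖x t - xs‖ := by positivity
    have hgd' : ⟪gradient f (x t), xs - v t⟫ - ⟪gradient f xs, xs - v t⟫
        ≤ β*‖x t - xs‖*(‖x t - xs‖+‖v t - x t‖) :=
      le_trans hgd (mul_le_mul_of_nonneg_left htri hβd)
    linarith [horacle, hQl, hQu, hsubv, e1.le, e1.ge, e2.le, e2.ge, hgd']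
  -- (F5): per-step decrease bound
  have hF5 : F (x (t+1)) - F xs ≤ (β₂/6 + CA)*‖x t - xs‖^3
      + β₂/6*‖v t - x t‖^3 := by
    have hFv := hF (v t)
    have hFx := hF (x t)
    have hFxs := hF xs
    rw [hupd t]
    split_ifs with hcase
    · linarith [htup, htdn, horacle]
    · have hge : F (x t) ≤ F (v t) := not_lt.mp hcase
      linarith [htup, htdn, horacle]
  exact final_algebra α β β₂ CA (F (x t) - F xs) (F (x (t+1)) - F xs)
    ‖x t - xs‖ ‖v t - x t‖ hα hαβ hβ₂ hCA hδ0 (norm_nonneg _) (norm_nonneg _)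
    h2 hF4 hF5
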